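/- Let φ¹(t) = 5^{−2} t² (log t)^4 and φ²(t) = 5^{−2} e^{−2+2√(1−t)} (2t + 2√(1−t) − 2)² for t in a sufficiently small right neighborhood of 0, with φ¹(0) = φ²(0) = 0, and for n large define A_n = log( n^{−1/2} · (φ²)^{-1}(n^{−1/2}) / ((φ¹)^{-1}(n^{−1/2}))² ), where the inverses are the generalized inverses restricted to small arguments. Then the sequence (|A_n|)_n is unbounded. -/

import Mathlib

open Real Set

noncomputable section

/-- `φ¹(t) = 5⁻² t² (log t)⁴` (with `φ¹(0) = 0`, since `Real.log 0 = 0`). -/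
def phi1 (t : ℝ) : ℝ := (5 : ℝ) ^ (-2 : ℤ) * t ^ 2 * Real.log t ^ 4

/-- `φ²(t) = 5⁻² e^{-2+2√(1-t)} (2t + 2√(1-t) - 2)²` (with `φ²(0) = 0`). -/
def phi2 (t : ℝ) : ℝ :=
  (5 : ℝ) ^ (-2 : ℤ) * Real.exp (-2 + 2 * Real.sqrt (1 - t)) *
    (2 * t + 2 * Real.sqrt (1 - t) - 2) ^ 2

/-- The generalized inverse restricted to small arguments:
`φ⁻¹(s) = sup {t ∈ [0,c] : φ t ≤ s}`. -/
def ginvOn (φ : ℝ → ℝ) (c s : ℝ) : ℝ := sSup {t : ℝ | t ∈ Set.Icc 0 c ∧ φ t ≤ s}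

/-- The sequence `A_n = log(n^{-1/2} (φ²)⁻¹(n^{-1/2}) / ((φ¹)⁻¹(n^{-1/2}))²)`
(inverses restricted to `[0,c]`). -/
def seqA (c : ℝ) (n : ℕ) : ℝ :=
  Real.log ((Real.sqrt n)⁻¹ * ginvOn phi2 c (Real.sqrt n)⁻¹ /
    ginvOn phi1 c (Real.sqrt n)⁻¹ ^ 2)

lemma le_ginvOn {φ : ℝ → ℝ} {c s t : ℝ} (ht : t ∈ Set.Icc 0 c) (hφ : φ t ≤ s) :
    t ≤ ginvOn φ c s :=
  le_csSup ⟨c, fun _ hx => hx.1.2⟩ ⟨ht, hφ⟩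

lemma ginvOn_le {φ : ℝ → ℝ} {c s t : ℝ} (hm : StrictMonoOn φ (Set.Icc 0 c))
    (ht : t ∈ Set.Icc 0 c) (hs : s < φ t) : ginvOn φ c s ≤ t := by
  refine Real.sSup_le ?_ ht.1
  rintro x ⟨hx, hxs⟩
  by_contra hlt
  push_neg at hlt
  exact absurd hxs (not_le.2 (hs.trans (hm ht hx hlt)))

lemma phi2_le_sq {t : ℝ} (h0 : 0 ≤ t) (h1 : t ≤ 1) : phi2 t ≤ t ^ 2 := by
  have h1t : (0:ℝ) ≤ 1 - t := by linarith
  have hu2 : Real.sqrt (1 - t) ^ 2 = 1 - t := Real.sq_sqrt h1t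
  set u := Real.sqrt (1 - t) with hu
  have hu0 : 0 ≤ u := Real.sqrt_nonneg _
  have hu1 : u ≤ 1 := by nlinarith
  have hE : Real.exp (-2 + 2 * u) ≤ 1 := Real.exp_le_one_iff.2 (by linarith)
  have hS : (2 * t + 2 * u - 2) ^ 2 ≤ 4 * t ^ 2 := by
    nlinarith [mul_nonneg (sq_nonneg (1 - u)) hu0, sq_nonneg (1 - u)]
  have hS0 : 0 ≤ (2 * t + 2 * u - 2) ^ 2 := sq_nonneg _
  unfold phi2
  rw [← hu, show ((5:ℝ) ^ (-2 : ℤ)) = 1/25 by norm_num]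
  nlinarith [mul_le_mul hE hS hS0 zero_le_one, sq_nonneg t]

lemma phi2_ge {c t : ℝ} (hc1 : c < 1) (h0 : 0 ≤ t) (htc : t ≤ c) :
    Real.exp (-2) * ((1 - c) * t ^ 2) / 25 ≤ phi2 t := by
  have h1t : (0:ℝ) ≤ 1 - t := by linarith
  have hu2 : Real.sqrt (1 - t) ^ 2 = 1 - t := Real.sq_sqrt h1t
  set u := Real.sqrt (1 - t) with hu
  have hu0 : 0 ≤ u := Real.sqrt_nonneg _
  have hu1 : u ≤ 1 := by nlinarith
  have hE : Real.exp (-2) ≤ Real.exp (-2 + 2 * u) := Real.exp_le_exp.2 (by linarith)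
  have h1u : t ≤ 2 * (1 - u) := by nlinarith
  have h1u0 : 0 ≤ 1 - u := by linarith
  have huc : 1 - c ≤ u ^ 2 := by linarith
  have h4 : (t / 2) ^ 2 ≤ (1 - u) ^ 2 := pow_le_pow_left₀ (by linarith) (by linarith) 2
  have hS : (1 - c) * t ^ 2 ≤ (2 * t + 2 * u - 2) ^ 2 := by
    have hmul : (1 - c) * (t / 2) ^ 2 ≤ u ^ 2 * (1 - u) ^ 2 :=
      mul_le_mul huc h4 (by positivity) (by positivity)
    nlinarith [hmul]
  have hS0 : 0 ≤ (1 - c) * t ^ 2 := by nlinarith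
  unfold phi2
  rw [← hu, show ((5:ℝ) ^ (-2 : ℤ)) = 1/25 by norm_num]
  nlinarith [mul_le_mul hE hS hS0 (Real.exp_pos (-2 + 2 * u)).le]

lemma phi1_bound {s : ℝ} (hs : 0 < s) (hL : 9 ≤ -Real.log s) :
    phi1 (Real.sqrt s / (-Real.log s) ^ 2) ≤ s := by
  set L := -Real.log s with hLdef
  have hL0 : (0:ℝ) < L := by linarith
  have hlogs : Real.log s = -L := by rw [hLdef]; ring
  have hlogL0 : 0 ≤ Real.log L := Real.log_nonneg (by linarith)
  have hsq3 : (3:ℝ) ≤ Real.sqrt L := by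
    rw [show (3:ℝ) = Real.sqrt 9 by
      rw [show (9:ℝ) = 3 ^ 2 by norm_num, Real.sqrt_sq (by norm_num)]]
    exact Real.sqrt_le_sqrt hL
  have hmulself : Real.sqrt L * Real.sqrt L = L := Real.mul_self_sqrt hL0.le
  have hsqle : Real.sqrt L ≤ L / 3 := by nlinarith
  have hlogL : Real.log L ≤ 2 * L / 3 := by
    have h1 : Real.log (Real.sqrt L) ≤ Real.sqrt L - 1 :=
      Real.log_le_sub_one_of_pos (by positivity)
    have h2 : Real.log L = 2 * Real.log (Real.sqrt L) := by
      rw [Real.log_sqrt hL0.le]; ring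
    linarith
  have hB : Real.log (Real.sqrt s / L ^ 2) = -(L / 2 + 2 * Real.log L) := by
    rw [Real.log_div (by positivity) (by positivity), Real.log_sqrt hs.le,
      Real.log_pow, hlogs]
    push_cast
    ring
  have hB2 : (Real.sqrt s / L ^ 2) ^ 2 = s / L ^ 4 := by
    rw [div_pow, Real.sq_sqrt hs.le, ← pow_mul]
  have hA : L / 2 + 2 * Real.log L ≤ 11 * L / 6 := by linarith
  have hA0 : 0 ≤ L / 2 + 2 * Real.log L := by linarith
  have hA4 : (L / 2 + 2 * Real.log L) ^ 4 ≤ (11 * L / 6) ^ 4 := pow_le_pow_left₀ hA0 hA 4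
  have hL4 : (0:ℝ) < L ^ 4 := by positivity
  have hexp : (11 * L / 6) ^ 4 = 14641 / 1296 * L ^ 4 := by ring
  rw [hexp] at hA4
  have h25 : (L / 2 + 2 * Real.log L) ^ 4 ≤ 25 * L ^ 4 := by
    clear_value L
    linarith [hA4, hL4.le]
  unfold phi1
  rw [hB, hB2, show ((5:ℝ) ^ (-2 : ℤ)) = 1/25 by norm_num]
  rw [show (-(L / 2 + 2 * Real.log L)) ^ 4 = (L / 2 + 2 * Real.log L) ^ 4 by ring]
  rw [show (1:ℝ)/25 * (s / L ^ 4) * (L / 2 + 2 * Real.log L) ^ 4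
      = s * (L / 2 + 2 * Real.log L) ^ 4 / (25 * L ^ 4) by ring]
  rw [div_le_iff₀ (by positivity)]
  calc s * (L / 2 + 2 * Real.log L) ^ 4 ≤ s * (25 * L ^ 4) :=
        mul_le_mul_of_nonneg_left h25 hs.le
    _ = s * (25 * L ^ 4) := rfl

lemma sqrt_nat_tendsto :
    Filter.Tendsto (fun n : ℕ => Real.sqrt n) Filter.atTop Filter.atTop := by
  have h := (tendsto_rpow_atTop (by norm_num : (0:ℝ) < 1/2)).comp
    (tendsto_natCast_atTop_atTop (R := ℝ))
  refine h.congr fun n => ?_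
  simp only [Function.comp]
  rw [Real.sqrt_eq_rpow]

lemma aux_tendsto (C : ℝ) :
    Filter.Tendsto
      (fun n : ℕ => C * Real.sqrt ((Real.sqrt n)⁻¹) * (-Real.log (Real.sqrt n)⁻¹) ^ 4)
      Filter.atTop (nhds 0) := by
  have h1 : Filter.Tendsto (fun y : ℝ => Real.log y ^ (4:ℕ) / Real.sqrt y)
      Filter.atTop (nhds 0) := by
    have h := (isLittleO_log_rpow_rpow_atTop (4:ℝ)
      (by norm_num : (0:ℝ) < 1/2)).tendsto_div_nhds_zero
    refine h.congr fun y => ?_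
    rw [← Real.rpow_natCast (Real.log y) 4, Real.sqrt_eq_rpow]
    norm_num
  have h3 := (h1.comp sqrt_nat_tendsto).const_mul C
  rw [mul_zero] at h3
  refine h3.congr fun n => ?_
  simp only [Function.comp]
  rw [Real.sqrt_inv, Real.log_inv, neg_neg]
  ring

/-- The sequence `(|A_n|)` (for large `n`) is unbounded, where the inverses of
`φ¹, φ²` are restricted to any interval `[0,c]` on which these functions are strictly
increasing and continuous. -/
theorem statement15 (c : ℝ) (hc0 : 0 < c) (hc1 : c < 1)
    (h1m : StrictMonoOn phi1 (Set.Icc 0 c)) (h1c : ContinuousOn phi1 (Set.Icc 0 c))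
    (h2m : StrictMonoOn phi2 (Set.Icc 0 c)) (h2c : ContinuousOn phi2 (Set.Icc 0 c)) :
    ∀ M : ℝ, ∀ N : ℕ, ∃ n : ℕ, N ≤ n ∧ M < |seqA c n| := by
  intro M N
  have hk2 : (0:ℝ) < 1 - c := by linarith
  set k : ℝ := Real.sqrt (1 - c) with hkdef
  have hk0 : 0 < k := Real.sqrt_pos.2 hk2
  have hksq : k ^ 2 = 1 - c := Real.sq_sqrt hk2.le
  set C : ℝ := 10 * Real.exp 1 / k with hCdef
  have hC0 : 0 < C := by positivity
  -- eventually facts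
  have hsqn := sqrt_nat_tendsto
  have hs_pos : ∀ᶠ n : ℕ in Filter.atTop, 0 < (Real.sqrt n)⁻¹ := by
    filter_upwards [hsqn.eventually_ge_atTop 1] with n hn
    have : (0:ℝ) < Real.sqrt n := by linarith
    positivity
  have hL9 : ∀ᶠ n : ℕ in Filter.atTop, 9 ≤ -Real.log (Real.sqrt n)⁻¹ := by
    filter_upwards [(Real.tendsto_log_atTop.comp hsqn).eventually_ge_atTop 9] with n hn
    simp only [Function.comp] at hn
    rw [Real.log_inv, neg_neg]
    exact hn
  have hε : 0 < min c (c * k / (10 * Real.exp 1)) := lt_min hc0 (by positivity)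
  have hss : Filter.Tendsto (fun n : ℕ => Real.sqrt ((Real.sqrt n)⁻¹))
      Filter.atTop (nhds 0) := by
    have h := (tendsto_inv_atTop_zero.comp hsqn).sqrt
    rwa [Real.sqrt_zero] at h
  have hsmall : ∀ᶠ n : ℕ in Filter.atTop,
      Real.sqrt ((Real.sqrt n)⁻¹) ≤ min c (c * k / (10 * Real.exp 1)) :=
    hss.eventually_le_const hε
  have hmain : ∀ᶠ n : ℕ in Filter.atTop,
      C * Real.sqrt ((Real.sqrt n)⁻¹) * (-Real.log (Real.sqrt n)⁻¹) ^ 4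
        < Real.exp (-|M|) :=
    (aux_tendsto C).eventually_lt_const (Real.exp_pos _)
  obtain ⟨n, hN, hs, hL9n, hsm, hmn⟩ :=
    ((Filter.eventually_ge_atTop N).and (hs_pos.and (hL9.and (hsmall.and hmain)))).exists
  refine ⟨n, hN, ?_⟩
  set s : ℝ := (Real.sqrt n)⁻¹ with hsdef
  have hsc : Real.sqrt s ≤ c := le_trans hsm (min_le_left _ _)
  have hsck : Real.sqrt s ≤ c * k / (10 * Real.exp 1) := le_trans hsm (min_le_right _ _)
  have hs1 : Real.sqrt s ≤ 1 := le_trans hsc hc1.le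
  have hsqs0 : 0 < Real.sqrt s := Real.sqrt_pos.2 hs
  -- bounds for ginv of phi1
  set B1 : ℝ := Real.sqrt s / (-Real.log s) ^ 2 with hB1def
  have hL0 : (0:ℝ) < -Real.log s := by linarith
  have hL2 : 1 ≤ (-Real.log s) ^ 2 := by nlinarith
  have hB1pos : 0 < B1 := div_pos hsqs0 (by positivity)
  have hB1c : B1 ≤ c := le_trans (div_le_self hsqs0.le hL2) hsc
  have hg1 : B1 ≤ ginvOn phi1 c s :=
    le_ginvOn ⟨hB1pos.le, hB1c⟩ (phi1_bound hs hL9n)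
  have hg10 : 0 < ginvOn phi1 c s := lt_of_lt_of_le hB1pos hg1
  -- lower bound for ginv of phi2
  have hphi2s : phi2 (Real.sqrt s) ≤ s := by
    have h := phi2_le_sq hsqs0.le hs1
    rwa [Real.sq_sqrt hs.le] at h
  have hg2l : Real.sqrt s ≤ ginvOn phi2 c s :=
    le_ginvOn ⟨hsqs0.le, hsc⟩ hphi2s
  have hg20 : 0 < ginvOn phi2 c s := lt_of_lt_of_le hsqs0 hg2l
  -- upper bound for ginv of phi2
  set U2 : ℝ := C * Real.sqrt s with hU2def
  have hU2pos : 0 < U2 := mul_pos hC0 hsqs0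
  have hU2c : U2 ≤ c := by
    have h1 : C * Real.sqrt s ≤ C * (c * k / (10 * Real.exp 1)) :=
      mul_le_mul_of_nonneg_left hsck hC0.le
    have h2 : C * (c * k / (10 * Real.exp 1)) = c := by
      rw [hCdef]
      field_simp
    linarith
  have hee : Real.exp (-2) * Real.exp 1 ^ 2 = 1 := by
    rw [sq, ← Real.exp_add, ← Real.exp_add]
    norm_num
  have hCk2 : (C * k) ^ 2 = 100 * Real.exp 1 ^ 2 := by
    have : C * k = 10 * Real.exp 1 := by
      rw [hCdef]; field_simp
    rw [this]; ring
  have hU2sq : U2 ^ 2 = C ^ 2 * s := by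
    rw [hU2def, mul_pow, Real.sq_sqrt hs.le]
  have hval : Real.exp (-2) * ((1 - c) * U2 ^ 2) / 25 = 4 * s := by
    calc Real.exp (-2) * ((1 - c) * U2 ^ 2) / 25
        = Real.exp (-2) * (k ^ 2 * (C ^ 2 * s)) / 25 := by rw [← hksq, hU2sq]
      _ = (C * k) ^ 2 * Real.exp (-2) * s / 25 := by ring
      _ = 100 * Real.exp 1 ^ 2 * Real.exp (-2) * s / 25 := by rw [hCk2]
      _ = 4 * s * (Real.exp (-2) * Real.exp 1 ^ 2) := by ring
      _ = 4 * s := by rw [hee]; ring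
  have hsU2 : s < phi2 U2 := by
    have hlow := phi2_ge hc1 hU2pos.le hU2c
    rw [hval] at hlow
    linarith
  have hg2u : ginvOn phi2 c s ≤ U2 := ginvOn_le h2m ⟨hU2pos.le, hU2c⟩ hsU2
  -- combine
  have hB1sq : B1 ^ 2 = s / (-Real.log s) ^ 4 := by
    rw [hB1def, div_pow, Real.sq_sqrt hs.le, ← pow_mul]
  have hXpos : 0 < s * ginvOn phi2 c s / ginvOn phi1 c s ^ 2 := by positivity
  have hXle : s * ginvOn phi2 c s / ginvOn phi1 c s ^ 2 ≤ s * U2 / B1 ^ 2 :=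
    div_le_div₀ (by positivity) (mul_le_mul_of_nonneg_left hg2u hs.le)
      (by positivity) (pow_le_pow_left₀ hB1pos.le hg1 2)
  have hU2B : s * U2 / B1 ^ 2 = C * Real.sqrt s * (-Real.log s) ^ 4 := by
    rw [hB1sq, hU2def]
    field_simp
  have hXlt : s * ginvOn phi2 c s / ginvOn phi1 c s ^ 2 < Real.exp (-|M|) := by
    rw [hU2B] at hXle
    exact lt_of_le_of_lt hXle hmn
  have hseq : seqA c n = Real.log (s * ginvOn phi2 c s / ginvOn phi1 c s ^ 2) := by
    rw [hsdef]; rfl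
  have hlog : seqA c n < -|M| := by
    rw [hseq, Real.log_lt_iff_lt_exp hXpos]
    exact hXlt
  have hA0 : seqA c n ≤ 0 := by
    have := abs_nonneg M; linarith
  have habs : |M| < |seqA c n| := by
    rw [abs_of_nonpos hA0]; linarith
  exact lt_of_le_of_lt (le_abs_self M) habs
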